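/- Let N ≥ 2, m₀ ∈ L^∞(𝕋), h ∈ L¹(𝕋) with h ≥ 0, and let L²(h) = L²(𝕋, h dμ). Define S₀ on L²(h) by (S₀ξ)(z) = m₀(z) ξ(z^N). Then S₀ is an isometry on L²(h) if and only if R(h) = h, where R is the Ruelle operator associated to m₀. -/

import Mathlib

open MeasureTheory Filter Set
open scoped Real ENNReal

/-- The Ruelle transfer operator of order `N` with filter `m₀`, on complex
functions on the circle (encoded as `1`-periodic functions on `ℝ`):
`(Rf)(x) = (1/N) ∑_{k<N} |m₀((x+k)/N)|² f((x+k)/N)`. -/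
noncomputable def ruelle (N : ℕ) (m₀ : ℝ → ℂ) (f : ℝ → ℂ) : ℝ → ℂ :=
  fun x => (N : ℂ)⁻¹ *
    ∑ k ∈ Finset.range N, (‖m₀ ((x + k) / N)‖ : ℂ) ^ 2 * f ((x + k) / N)

/-- The Ruelle transfer operator acting on real-valued functions. -/
noncomputable def ruelleR (N : ℕ) (m₀ : ℝ → ℂ) (h : ℝ → ℝ) : ℝ → ℝ :=
  fun x => (N : ℝ)⁻¹ *
    ∑ k ∈ Finset.range N, ‖m₀ ((x + k) / N)‖ ^ 2 * h ((x + k) / N)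

/- ### Auxiliary lemmas -/

lemma periodic_add_nat' {α : Type*} {f : ℝ → α} (hf : Function.Periodic f 1) (x : ℝ) (k : ℕ) :
    f (x + k) = f x := by
  induction k with
  | zero => simp
  | succ n ih =>
    have h1 : ((n + 1 : ℕ) : ℝ) = (n : ℝ) + 1 := by push_cast; ring
    rw [h1, ← add_assoc, hf (x + n), ih]

lemma periodic_add_int' {α : Type*} {f : ℝ → α} (hf : Function.Periodic f 1) (x : ℝ) (n : ℤ) :
    f (x + n) = f x := by
  induction n using Int.rec with
  | ofNat k => exact_mod_cast periodic_add_nat' hf x k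
  | negSucc k =>
    have h1 : f (x + Int.negSucc k + (k + 1 : ℕ)) = f (x + Int.negSucc k) :=
      periodic_add_nat' hf _ _
    have h2 : x + (Int.negSucc k : ℝ) + ((k + 1 : ℕ) : ℝ) = x := by
      push_cast [Int.negSucc_eq]; ring
    rw [h2] at h1
    exact h1.symm

lemma aux_preimage_add (k : ℝ) :
    (fun y : ℝ => y + k) ⁻¹' Set.Ioc k (k + 1) = Set.Ioc (0:ℝ) 1 := by
  ext t
  simp only [Set.mem_preimage, Set.mem_Ioc]
  constructor <;> rintro ⟨h1, h2⟩ <;> constructor <;> linarith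

lemma aux_preimage_div (c : ℝ) (hc : 0 < c) (a b : ℝ) :
    (fun y : ℝ => y / c) ⁻¹' Set.Ioc (a / c) (b / c) = Set.Ioc a b := by
  ext t
  simp only [Set.mem_preimage, Set.mem_Ioc]
  rw [div_lt_div_iff_of_pos_right hc, div_le_div_iff_of_pos_right hc]

/-- change of variables for a single piece -/
lemma lemA1 {N : ℕ} (hN : 0 < N) (F : ℝ → ℝ≥0∞) (hF : Measurable F) (k : ℕ) :
    ∫⁻ y in Set.Ioc (0:ℝ) 1, F ((y + k) / N)
      = (N : ℝ≥0∞) * ∫⁻ x in Set.Ioc ((k:ℝ)/N) (((k:ℝ)+1)/N), F x := by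
  have hN0 : (0:ℝ) < N := by exact_mod_cast hN
  have hadd : Measurable fun y : ℝ => y + (k:ℝ) := by exact measurable_add_const _
  have hdiv : Measurable fun y : ℝ => y / (N:ℝ) := by exact measurable_id.div_const _
  have hFdiv : Measurable fun t : ℝ => F (t / (N:ℝ)) := by exact hF.comp hdiv
  have ht : (volume : Measure ℝ).restrict (Set.Ioc (k:ℝ) ((k:ℝ)+1))
      = Measure.map (fun y : ℝ => y + (k:ℝ)) (volume.restrict (Set.Ioc (0:ℝ) 1)) := by
    conv_lhs => rw [← map_add_right_eq_self (volume : Measure ℝ) (k:ℝ)]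
    rw [Measure.restrict_map hadd measurableSet_Ioc, aux_preimage_add]
  have h1 : ∫⁻ y in Set.Ioc (0:ℝ) 1, F ((y + k) / N)
      = ∫⁻ t in Set.Ioc (k:ℝ) ((k:ℝ)+1), F (t / N) := by
    rw [ht]
    exact (lintegral_map hFdiv hadd).symm
  have hsc : Measure.map (fun y : ℝ => y / (N:ℝ)) (volume.restrict (Set.Ioc (k:ℝ) ((k:ℝ)+1)))
      = (ENNReal.ofReal (N:ℝ)) • (volume.restrict (Set.Ioc ((k:ℝ)/N) (((k:ℝ)+1)/N))) := by
    have hpre : (fun y : ℝ => y / (N:ℝ)) ⁻¹' Set.Ioc ((k:ℝ)/N) (((k:ℝ)+1)/N)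
        = Set.Ioc (k:ℝ) ((k:ℝ)+1) := aux_preimage_div _ hN0 _ _
    have hmap : Measure.map (fun y : ℝ => y / (N:ℝ)) (volume : Measure ℝ)
        = ENNReal.ofReal (N:ℝ) • volume := by
      have heq : (fun y : ℝ => y / (N:ℝ)) = (fun y : ℝ => (N:ℝ)⁻¹ * y) := by
        funext y; rw [div_eq_inv_mul]
      rw [heq, Real.map_volume_mul_left (a := (N:ℝ)⁻¹) (by positivity)]
      congr 1
      rw [inv_inv, abs_of_pos hN0]
    rw [← hpre, ← Measure.restrict_map hdiv measurableSet_Ioc, hmap, Measure.restrict_smul]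
  have h2 : ∫⁻ t in Set.Ioc (k:ℝ) ((k:ℝ)+1), F (t / N)
      = (N : ℝ≥0∞) * ∫⁻ x in Set.Ioc ((k:ℝ)/N) (((k:ℝ)+1)/N), F x := by
    have := lintegral_map hF hdiv (μ := volume.restrict (Set.Ioc (k:ℝ) ((k:ℝ)+1)))
    rw [hsc, lintegral_smul_measure, ENNReal.ofReal_natCast] at this
    exact this.symm
  rw [h1, h2]

/-- the pieces sum to the whole interval -/
lemma lemA2 {N : ℕ} (hN : 0 < N) (F : ℝ → ℝ≥0∞) :
    ∑ k ∈ Finset.range N, ∫⁻ x in Set.Ioc ((k:ℝ)/N) (((k:ℝ)+1)/N), F x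
      = ∫⁻ x in Set.Ioc (0:ℝ) 1, F x := by
  have hN0 : (0:ℝ) < N := by exact_mod_cast hN
  have key : ∀ n : ℕ, ∑ k ∈ Finset.range n, ∫⁻ x in Set.Ioc ((k:ℝ)/N) (((k:ℝ)+1)/N), F x
      = ∫⁻ x in Set.Ioc (0:ℝ) ((n:ℝ)/N), F x := by
    intro n
    induction n with
    | zero => simp
    | succ m ih =>
      rw [Finset.sum_range_succ, ih,
        ← lintegral_union measurableSet_Ioc
          (Set.Ioc_disjoint_Ioc_of_le (a := (0:ℝ)) (b := (m:ℝ)/N) (c := (m:ℝ)/N) (d := ((m:ℝ)+1)/N) le_rfl),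
        Set.Ioc_union_Ioc_eq_Ioc (by positivity)
          ((div_le_div_iff_of_pos_right hN0).mpr (by linarith))]
      norm_num [Nat.cast_succ]
  have := key N
  rwa [div_self hN0.ne'] at this

/-- Main change-of-variables lemma for `lintegral`. -/
lemma lemA {N : ℕ} (hN : 0 < N) (F : ℝ → ℝ≥0∞) (hF : Measurable F) :
    ∫⁻ x in Set.Ioc (0:ℝ) 1, F x
      = (N : ℝ≥0∞)⁻¹ * ∑ k ∈ Finset.range N, ∫⁻ y in Set.Ioc (0:ℝ) 1, F ((y + k) / N) := by
  rw [← lemA2 hN F, Finset.mul_sum]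
  refine Finset.sum_congr rfl fun k _ => ?_
  rw [lemA1 hN F hF k, ← mul_assoc, ENNReal.inv_mul_cancel (by exact_mod_cast hN.ne')
    (ENNReal.natCast_ne_top N), one_mul]

lemma measurable_ruelleR {N : ℕ} {m₀ : ℝ → ℂ} {h : ℝ → ℝ} (hm : Measurable m₀)
    (hh : Measurable h) : Measurable (ruelleR N m₀ h) := by
  apply Measurable.const_mul
  apply Finset.measurable_sum
  intro k _
  have hg : Measurable (fun x : ℝ => (x + (k:ℝ)) / N) :=
    (measurable_id.add_const _).div_const _
  exact (((hm.comp hg).norm).pow_const 2).mul (hh.comp hg)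

lemma ruelleR_nonneg {N : ℕ} {m₀ : ℝ → ℂ} {h : ℝ → ℝ} (hpos : ∀ x, 0 ≤ h x) (x : ℝ) :
    0 ≤ ruelleR N m₀ h x := by
  apply mul_nonneg (by positivity)
  exact Finset.sum_nonneg fun k _ => mul_nonneg (by positivity) (hpos _)

lemma periodic_ruelleR {N : ℕ} (hN : 0 < N) {m₀ : ℝ → ℂ} {h : ℝ → ℝ}
    (hmper : Function.Periodic m₀ 1) (hhper : Function.Periodic h 1) :
    Function.Periodic (ruelleR N m₀ h) 1 := by
  have hN0 : (0:ℝ) < N := by exact_mod_cast hN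
  intro x
  unfold ruelleR
  congr 1
  set g : ℕ → ℝ := fun k => ‖m₀ ((x + k) / N)‖ ^ 2 * h ((x + k) / N) with hg
  have hgN : g N = g 0 := by
    simp only [hg]
    have h0 : (x + (N:ℝ)) / N = (x + ((0:ℕ):ℝ)) / N + 1 := by
      rw [add_div, div_self hN0.ne']
      push_cast
      ring
    rw [h0, hmper, hhper]
  have hterm : ∀ k : ℕ, ‖m₀ ((x + 1 + k) / N)‖ ^ 2 * h ((x + 1 + k) / N) = g (k + 1) := by
    intro k
    simp only [hg]
    congr 3 <;> push_cast <;> ring_nf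
  calc ∑ k ∈ Finset.range N, ‖m₀ ((x + 1 + k) / N)‖ ^ 2 * h ((x + 1 + k) / N)
      = ∑ k ∈ Finset.range N, g (k + 1) := Finset.sum_congr rfl fun k _ => hterm k
    _ = ∑ k ∈ Finset.range N, g k := by
        have e1 : ∑ k ∈ Finset.range (N + 1), g k
            = (∑ k ∈ Finset.range N, g (k + 1)) + g 0 := Finset.sum_range_succ' g N
        have e2 : ∑ k ∈ Finset.range (N + 1), g k
            = (∑ k ∈ Finset.range N, g k) + g N := Finset.sum_range_succ g N
        rw [hgN] at e2
        linarith [e1, e2]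

/-- Weighted change-of-variables: the key identity. -/
lemma lemB {N : ℕ} (hN : 0 < N) {m₀ : ℝ → ℂ} (hm : Measurable m₀)
    {h : ℝ → ℝ} (hh : Measurable h) (hhper : Function.Periodic h 1) (hpos : ∀ x, 0 ≤ h x)
    {φ : ℝ → ℝ} (hφ : Measurable φ) (hφper : Function.Periodic φ 1) (hφ0 : ∀ x, 0 ≤ φ x) :
    ∫⁻ x in Set.Ioc (0:ℝ) 1, ENNReal.ofReal (‖m₀ x‖ ^ 2 * φ ((N:ℝ) * x) * h x)
      = ∫⁻ y in Set.Ioc (0:ℝ) 1, ENNReal.ofReal (φ y * ruelleR N m₀ h y) := by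
  have hN0 : (0:ℝ) < N := by exact_mod_cast hN
  set F : ℝ → ℝ≥0∞ := fun x => ENNReal.ofReal (‖m₀ x‖ ^ 2 * φ ((N:ℝ) * x) * h x) with hF
  have hFm : Measurable F := by
    apply Measurable.ennreal_ofReal
    exact ((hm.norm.pow_const 2).mul (hφ.comp (measurable_const_mul _))).mul hh
  have hterm : ∀ k : ℕ, ∀ y : ℝ,
      F ((y + k) / N) = ENNReal.ofReal (‖m₀ ((y + k) / N)‖ ^ 2 * φ y * h ((y + k) / N)) := by
    intro k y
    simp only [hF]
    rw [mul_comm (N:ℝ) _, div_mul_cancel₀ _ hN0.ne', periodic_add_nat' hφper y k]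
  rw [lemA hN F hFm]
  have hsum : ∀ k ∈ Finset.range N, ∫⁻ y in Set.Ioc (0:ℝ) 1, F ((y + k) / N)
      = ∫⁻ y in Set.Ioc (0:ℝ) 1,
          ENNReal.ofReal (‖m₀ ((y + k) / N)‖ ^ 2 * φ y * h ((y + k) / N)) := by
    intro k _
    exact lintegral_congr fun y => hterm k y
  rw [Finset.sum_congr rfl hsum]
  have hmeas : ∀ k ∈ Finset.range N, Measurable fun y : ℝ =>
      ENNReal.ofReal (‖m₀ ((y + k) / N)‖ ^ 2 * φ y * h ((y + k) / N)) := by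
    intro k _
    have hg : Measurable (fun y : ℝ => (y + (k:ℝ)) / N) :=
      (measurable_id.add_const _).div_const _
    exact Measurable.ennreal_ofReal
      ((((hm.comp hg).norm.pow_const 2).mul hφ).mul (hh.comp hg))
  rw [← lintegral_finset_sum _ hmeas, ← lintegral_const_mul _ (by
    exact Finset.measurable_sum _ hmeas)]
  refine lintegral_congr fun y => ?_
  have hNinv : (N : ℝ≥0∞)⁻¹ = ENNReal.ofReal ((N:ℝ)⁻¹) := by
    rw [ENNReal.ofReal_inv_of_pos hN0, ENNReal.ofReal_natCast]
  rw [← ENNReal.ofReal_sum_of_nonneg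
      (fun k _ => mul_nonneg (mul_nonneg (by positivity) (hφ0 y)) (hpos _)), hNinv,
    ← ENNReal.ofReal_mul (by positivity)]
  congr 1
  unfold ruelleR
  rw [Finset.mul_sum, Finset.mul_sum, Finset.mul_sum]
  exact Finset.sum_congr rfl fun k _ => by ring

/-- extension of an a.e. property from `(0,1]` to `ℝ` by periodicity -/
lemma periodic_ae_zero {f : ℝ → ℝ} (hmf : Measurable f) (hf : Function.Periodic f 1)
    (h0 : ∀ᵐ x ∂(volume.restrict (Set.Ioc (0:ℝ) 1)), f x = 0) :
    ∀ᵐ x ∂(volume : Measure ℝ), f x = 0 := by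
  have hEm : MeasurableSet {x : ℝ | f x ≠ 0} := by
    have := hmf (measurableSet_singleton (0:ℝ)).compl
    simpa [Set.preimage, Set.compl_setOf] using this
  have hE : volume ({x : ℝ | f x ≠ 0} ∩ Set.Ioc (0:ℝ) 1) = 0 := by
    have := ae_iff.mp h0
    rwa [Measure.restrict_apply hEm] at this
  have hsub : {x : ℝ | f x ≠ 0} ⊆
      ⋃ n : ℤ, (fun x : ℝ => x + (n:ℝ)) ⁻¹' ({x : ℝ | f x ≠ 0} ∩ Set.Ioc (0:ℝ) 1) := by
    intro x hx
    refine Set.mem_iUnion.mpr ⟨1 - ⌈x⌉, ?_⟩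
    have hc1 : (⌈x⌉ : ℝ) < x + 1 := Int.ceil_lt_add_one x
    have hc2 : x ≤ (⌈x⌉ : ℝ) := Int.le_ceil x
    refine ⟨?_, ?_, ?_⟩
    · show f (x + ((1 - ⌈x⌉ : ℤ) : ℝ)) ≠ 0
      rw [periodic_add_int' hf x (1 - ⌈x⌉)]
      exact hx
    · push_cast; linarith
    · push_cast; linarith
  have hnull : volume {x : ℝ | f x ≠ 0} = 0 := by
    refine measure_mono_null hsub (measure_iUnion_null fun n => ?_)
    rw [measure_preimage_add_right]
    exact hE
  exact ae_iff.mpr (by simpa using hnull)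

/-- `S₀ξ(z) = m₀(z)ξ(z^N)` is an isometry of `L²(h)` iff `R(h) = h`. -/
theorem stmt3 (N : ℕ) (hN : 2 ≤ N) (m₀ : ℝ → ℂ) (hm : Measurable m₀)
    (hmper : Function.Periodic m₀ 1) (hmb : ∃ C, ∀ᵐ x ∂volume, ‖m₀ x‖ ≤ C)
    (h : ℝ → ℝ) (hhm : Measurable h) (hhper : Function.Periodic h 1)
    (hpos : ∀ x, 0 ≤ h x) (hhi : IntegrableOn h (Set.Ioc (0:ℝ) 1)) :
    (∀ ξ : ℝ → ℂ, Measurable ξ → Function.Periodic ξ 1 →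
        IntegrableOn (fun x => ‖ξ x‖ ^ 2 * h x) (Set.Ioc (0:ℝ) 1) →
        ∫ x in Set.Ioc (0:ℝ) 1, ‖m₀ x * ξ (N * x)‖ ^ 2 * h x
          = ∫ x in Set.Ioc (0:ℝ) 1, ‖ξ x‖ ^ 2 * h x)
      ↔ ruelleR N m₀ h =ᵐ[volume] h := by
  have hN0 : 0 < N := by omega
  have hNR : (0:ℝ) < N := by exact_mod_cast hN0
  set μ₀ : Measure ℝ := volume.restrict (Set.Ioc (0:ℝ) 1) with hμ₀
  -- conversion between Bochner integral and lintegral for nonneg integrands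
  have conv : ∀ f : ℝ → ℝ, Measurable f → (∀ x, 0 ≤ f x) →
      ∫ x in Set.Ioc (0:ℝ) 1, f x = (∫⁻ x in Set.Ioc (0:ℝ) 1, ENNReal.ofReal (f x)).toReal := by
    intro f hf h0
    exact integral_eq_lintegral_of_nonneg_ae (Filter.Eventually.of_forall h0)
      hf.aestronglyMeasurable
  constructor
  · -- isometry → R h = h
    intro hiso
    obtain ⟨C, hC⟩ := hmb
    set C' : ℝ := max C 0 with hC'
    have hC'0 : 0 ≤ C' := le_max_right _ _
    have hCb : ∀ᵐ x ∂volume, ‖m₀ x‖ ≤ C' := hC.mono fun x hx => le_trans hx (le_max_left _ _)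
    -- finiteness of ∫⁻ h
    have hhfin : ∫⁻ x in Set.Ioc (0:ℝ) 1, ENNReal.ofReal (h x) < ⊤ := by
      have := hhi.2
      rw [hasFiniteIntegral_iff_norm] at this
      refine lt_of_le_of_lt (lintegral_mono fun x => ?_) this
      exact ENNReal.ofReal_le_ofReal (le_abs_self _)
    -- finiteness of ∫⁻ R h
    have hRfin : ∫⁻ y in Set.Ioc (0:ℝ) 1, ENNReal.ofReal (ruelleR N m₀ h y) < ⊤ := by
      have hB1 := lemB hN0 hm hhm hhper hpos (φ := fun _ => (1:ℝ)) measurable_const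
        (fun _ => rfl) (fun _ => zero_le_one)
      simp only [mul_one, one_mul] at hB1
      rw [← hB1]
      have hbd : ∫⁻ x in Set.Ioc (0:ℝ) 1, ENNReal.ofReal (‖m₀ x‖ ^ 2 * h x)
          ≤ ∫⁻ x in Set.Ioc (0:ℝ) 1, ENNReal.ofReal (C' ^ 2) * ENNReal.ofReal (h x) := by
        refine lintegral_mono_ae ((ae_restrict_of_ae hCb).mono fun x hx => ?_)
        rw [← ENNReal.ofReal_mul (by positivity)]
        refine ENNReal.ofReal_le_ofReal ?_
        exact mul_le_mul_of_nonneg_right (by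
          have := pow_le_pow_left₀ (norm_nonneg (m₀ x)) hx 2
          simpa using this) (hpos x)
      refine lt_of_le_of_lt hbd ?_
      rw [lintegral_const_mul' _ _ ENNReal.ofReal_ne_top]
      exact ENNReal.mul_lt_top ENNReal.ofReal_lt_top hhfin
    have hRint : IntegrableOn (ruelleR N m₀ h) (Set.Ioc (0:ℝ) 1) := by
      refine ⟨(measurable_ruelleR hm hhm).aestronglyMeasurable, ?_⟩
      rw [hasFiniteIntegral_iff_norm]
      refine lt_of_le_of_lt (lintegral_mono fun x => ?_) hRfin
      exact ENNReal.ofReal_le_ofReal (le_of_eq (abs_of_nonneg (ruelleR_nonneg hpos x)))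
    -- for every measurable set A, test with the indicator function
    have hAeq : ∀ A : Set ℝ, MeasurableSet A →
        ∫ x in Set.Ioc (0:ℝ) 1, A.indicator (fun _ => (1:ℝ)) (Int.fract x) * ruelleR N m₀ h x
          = ∫ x in Set.Ioc (0:ℝ) 1, A.indicator (fun _ => (1:ℝ)) (Int.fract x) * h x := by
      intro A hA
      set φ : ℝ → ℝ := fun x => A.indicator (fun _ => (1:ℝ)) (Int.fract x) with hφdef
      have hφm : Measurable φ := (measurable_const.indicator hA).comp measurable_fract
      have hφ0 : ∀ x, 0 ≤ φ x := fun x => by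
        by_cases hx : Int.fract x ∈ A <;>
          simp [hφdef, Set.indicator_of_mem, Set.indicator_of_notMem, hx]
      have hφ1 : ∀ x, φ x ≤ 1 := fun x => by
        by_cases hx : Int.fract x ∈ A <;>
          simp [hφdef, Set.indicator_of_mem, Set.indicator_of_notMem, hx]
      have hφper : Function.Periodic φ 1 := fun x => by simp [hφdef, Int.fract_add_one]
      set ξ : ℝ → ℂ := fun x => A.indicator (fun _ => (1:ℂ)) (Int.fract x) with hξdef
      have hξm : Measurable ξ := (measurable_const.indicator hA).comp measurable_fract
      have hξper : Function.Periodic ξ 1 := fun x => by simp [hξdef, Int.fract_add_one]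
      have hφξ : ∀ x, ‖ξ x‖ ^ 2 = φ x := fun x => by
        by_cases hx : Int.fract x ∈ A <;>
          simp [hξdef, hφdef, Set.indicator_of_mem, Set.indicator_of_notMem, hx]
      have hξint : IntegrableOn (fun x => ‖ξ x‖ ^ 2 * h x) (Set.Ioc (0:ℝ) 1) := by
        refine Integrable.mono hhi ((hξm.norm.pow_const 2).mul hhm).aestronglyMeasurable ?_
        refine Filter.Eventually.of_forall fun x => ?_
        rw [hφξ x, Real.norm_eq_abs, Real.norm_eq_abs, abs_of_nonneg (mul_nonneg (hφ0 x) (hpos x)),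
          abs_of_nonneg (hpos x)]
        exact mul_le_of_le_one_left (hpos x) (hφ1 x)
      have hkey := hiso ξ hξm hξper hξint
      -- convert both sides via lemB
      have hBφ := lemB hN0 hm hhm hhper hpos hφm hφper hφ0
      have hmL : Measurable fun x : ℝ => ‖m₀ x * ξ ((N:ℝ) * x)‖ ^ 2 * h x := by
        exact ((hm.mul (hξm.comp (measurable_const_mul _))).norm.pow_const 2).mul hhm
      have hmR : Measurable fun x : ℝ => ‖ξ x‖ ^ 2 * h x := by
        exact (hξm.norm.pow_const 2).mul hhm
      have hL : ∫ x in Set.Ioc (0:ℝ) 1, ‖m₀ x * ξ ((N:ℝ) * x)‖ ^ 2 * h x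
          = (∫⁻ y in Set.Ioc (0:ℝ) 1, ENNReal.ofReal (φ y * ruelleR N m₀ h y)).toReal := by
        rw [conv _ hmL (fun x => mul_nonneg (by positivity) (hpos x)), ← hBφ]
        congr 1
        refine lintegral_congr fun x => ?_
        congr 1
        rw [norm_mul, mul_pow, hφξ]
      have hR : ∫ x in Set.Ioc (0:ℝ) 1, ‖ξ x‖ ^ 2 * h x
          = (∫⁻ y in Set.Ioc (0:ℝ) 1, ENNReal.ofReal (φ y * h y)).toReal := by
        rw [conv _ hmR (fun x => mul_nonneg (by positivity) (hpos x))]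
        congr 1
        refine lintegral_congr fun x => ?_
        rw [hφξ]
      have h1 : ∫ x in Set.Ioc (0:ℝ) 1, φ x * ruelleR N m₀ h x
          = (∫⁻ y in Set.Ioc (0:ℝ) 1, ENNReal.ofReal (φ y * ruelleR N m₀ h y)).toReal :=
        conv _ (hφm.mul (measurable_ruelleR hm hhm))
          (fun x => mul_nonneg (hφ0 x) (ruelleR_nonneg hpos x))
      have h2 : ∫ x in Set.Ioc (0:ℝ) 1, φ x * h x
          = (∫⁻ y in Set.Ioc (0:ℝ) 1, ENNReal.ofReal (φ y * h y)).toReal :=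
        conv _ (hφm.mul hhm) (fun x => mul_nonneg (hφ0 x) (hpos x))
      rw [hL, hR] at hkey
      rw [h1, h2, hkey]
    -- replace fract-indicator by plain indicator a.e. on (0,1]
    have hfract : ∀ᵐ x ∂μ₀, Int.fract x = x ∨ x = 1 := by
      have h1 : ∀ᵐ x ∂μ₀, x ∈ Set.Ioc (0:ℝ) 1 := ae_restrict_mem measurableSet_Ioc
      refine h1.mono fun x hx => ?_
      rcases lt_or_eq_of_le hx.2 with hlt | heq
      · exact Or.inl (Int.fract_eq_self.mpr ⟨le_of_lt hx.1, hlt⟩)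
      · exact Or.inr heq
    have hone : ∀ᵐ x ∂μ₀, x ≠ (1:ℝ) := by
      refine ae_iff.mpr ?_
      have : μ₀ {x : ℝ | ¬ x ≠ 1} ≤ volume {(1:ℝ)} := by
        refine le_trans (le_of_eq (congrArg μ₀ ?_)) (Measure.restrict_le_self _)
        ext t; simp
      simpa [Real.volume_singleton] using le_antisymm (le_trans this (by simp)) (zero_le _)
    have hsets : ∀ s : Set ℝ, MeasurableSet s →
        ∫ x in s, ruelleR N m₀ h x ∂μ₀ = ∫ x in s, h x ∂μ₀ := by
      intro s hs
      have hfc : ∀ᵐ x ∂μ₀,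
          s.indicator (fun _ => (1:ℝ)) (Int.fract x) = s.indicator (fun _ => (1:ℝ)) x := by
        refine (hfract.and hone).mono fun x hx => ?_
        rcases hx.1 with hfr | heq
        · rw [hfr]
        · exact absurd heq hx.2
      have e1 : ∫ x in Set.Ioc (0:ℝ) 1, s.indicator (fun _ => (1:ℝ)) (Int.fract x) *
            ruelleR N m₀ h x = ∫ x in s, ruelleR N m₀ h x ∂μ₀ := by
        rw [integral_congr_ae (hfc.mono fun x hx => by rw [hx]), ← integral_indicator hs]
        refine integral_congr_ae (Filter.Eventually.of_forall fun x => ?_)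
        by_cases hxs : x ∈ s <;>
          simp [Set.indicator_of_mem, Set.indicator_of_notMem, hxs]
      have e2 : ∫ x in Set.Ioc (0:ℝ) 1, s.indicator (fun _ => (1:ℝ)) (Int.fract x) * h x
          = ∫ x in s, h x ∂μ₀ := by
        rw [integral_congr_ae (hfc.mono fun x hx => by rw [hx]), ← integral_indicator hs]
        refine integral_congr_ae (Filter.Eventually.of_forall fun x => ?_)
        by_cases hxs : x ∈ s <;>
          simp [Set.indicator_of_mem, Set.indicator_of_notMem, hxs]
      rw [← e1, ← e2]
      exact hAeq s hs
    have hfin : IsFiniteMeasure μ₀ := by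
      constructor
      rw [hμ₀, Measure.restrict_apply_univ, Real.volume_Ioc]
      simp
    have haeμ₀ : ruelleR N m₀ h =ᵐ[μ₀] h := by
      refine ae_eq_of_forall_setIntegral_eq_of_sigmaFinite
        (fun s hs _ => Integrable.restrict hRint) (fun s hs _ => Integrable.restrict hhi)
        (fun s hs _ => hsets s hs)
    -- extend by periodicity
    have hg : Function.Periodic (fun x => ruelleR N m₀ h x - h x) 1 :=
      (periodic_ruelleR hN0 hmper hhper).sub hhper
    have hgm : Measurable (fun x => ruelleR N m₀ h x - h x) :=
      (measurable_ruelleR hm hhm).sub hhm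
    have hg0 : ∀ᵐ x ∂μ₀, (fun x => ruelleR N m₀ h x - h x) x = 0 :=
      haeμ₀.mono fun x hx => by simp [hx]
    have := periodic_ae_zero hgm hg hg0
    exact this.mono fun x hx => by linarith [hx]
  · -- R h = h → isometry
    intro hR ξ hξm hξper hξint
    set φ : ℝ → ℝ := fun x => ‖ξ x‖ ^ 2 with hφdef
    have hφm : Measurable φ := hξm.norm.pow_const 2
    have hφper : Function.Periodic φ 1 := fun x => by simp [hφdef, hξper x]
    have hφ0 : ∀ x, 0 ≤ φ x := fun x => by positivity
    have hBφ := lemB hN0 hm hhm hhper hpos hφm hφper hφ0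
    have hae : ∫⁻ y in Set.Ioc (0:ℝ) 1, ENNReal.ofReal (φ y * ruelleR N m₀ h y)
        = ∫⁻ y in Set.Ioc (0:ℝ) 1, ENNReal.ofReal (φ y * h y) := by
      refine lintegral_congr_ae ((ae_restrict_of_ae hR).mono fun y hy => ?_)
      simp only [hy]
    have hmL : Measurable fun x : ℝ => ‖m₀ x * ξ ((N:ℝ) * x)‖ ^ 2 * h x := by
      exact ((hm.mul (hξm.comp (measurable_const_mul _))).norm.pow_const 2).mul hhm
    have hmR : Measurable fun x : ℝ => ‖ξ x‖ ^ 2 * h x := by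
      exact (hξm.norm.pow_const 2).mul hhm
    rw [conv _ hmL (fun x => mul_nonneg (by positivity) (hpos x)),
      conv _ hmR (fun x => mul_nonneg (by positivity) (hpos x))]
    congr 1
    rw [← hae, ← hBφ]
    refine lintegral_congr fun x => ?_
    congr 1
    rw [norm_mul, mul_pow]
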